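/- With notation as in the Q-value setup, for all z, w ∈ D(H)Q: (a) qval_ψ(z + w) ≥ min{qval_ψ(z), qval_ψ(w)}; (b) qval_ψ(z·w) ≥ qval_ψ(z) + qval_ψ(w) − |ψ|_Q, where the Q-defect is |ψ|_Q = max_{p,q∈Q} | qval_ψ(s(p)s(q)s(pq)⁻¹) − qval_ψ(p) − qval_ψ(q) + qval_ψ(pq) |. -/
import Mathlib


noncomputable section

open scoped Classical

variable {G Q D : Type*} [Group G] [Group Q] [Fintype Q] [DivisionRing D]

/-- The weight `(1/|Q|) ψ (s q ^ |Q|)` appearing in the `Q`-value. -/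
def qwt (π : G →* Q) (s : Q → G) (hs : ∀ q, π (s q) = q)
    (ι : ↥π.ker →* Dˣ) (ψ : D → EReal) (q : Q) : EReal :=
  (((Fintype.card Q : ℝ)⁻¹ : ℝ) : EReal) *
    ψ (ι ⟨s q ^ Fintype.card Q, by
      rw [MonoidHom.mem_ker, map_pow, hs, pow_card_eq_one]⟩)

/-- The `Q`-value `qval ψ x = min_{p,q} { ψ^p (x_q) + (1/|Q|) ψ (s q ^ |Q|) }`. -/
def qval (π : G →* Q) (s : Q → G) (hs : ∀ q, π (s q) = q)
    (c : G →* D ≃+* D) (ι : ↥π.ker →* Dˣ) (ψ : D → EReal) (x : Q → D) : EReal :=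
  ⨅ p : Q, ⨅ q : Q, (ψ (c (s p) (x q)) + qwt π s hs ι ψ q)

/-- The element of `D(H) Q` supported at `q` with coefficient `d`. -/
def qdelta (Q : Type*) [Group Q] (q : Q) (d : D) : Q → D :=
  fun p => if p = q then d else 0

/-- The `2`-cocycle value `μ (p, q) = s p * s q * (s (p q))⁻¹ ∈ H`, regarded inside
`D = D(H)` via `ι`. -/
def muD (π : G →* Q) (s : Q → G) (hs : ∀ q, π (s q) = q)
    (ι : ↥π.ker →* Dˣ) (p q : Q) : D :=
  (ι ⟨s p * s q * (s (p * q))⁻¹, by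
    simp [MonoidHom.mem_ker, map_mul, map_inv, hs, ← mul_assoc]⟩ : Dˣ)

/-- The twisted multiplication on `D(H) Q`:
`x_q q · y_p p = x_q · (s q · y_p · s q⁻¹) · (s q s p s (q p)⁻¹) · q p`. -/
def qmul (π : G →* Q) (s : Q → G) (hs : ∀ q, π (s q) = q)
    (c : G →* D ≃+* D) (ι : ↥π.ker →* Dˣ) (z w : Q → D) : Q → D :=
  fun r => ∑ p : Q, z p * c (s p) (w (p⁻¹ * r)) * muD π s hs ι p (p⁻¹ * r)

/-- The `Q`-defect
`|ψ|_Q = max_{p,q} |qval ψ (μ (p, q)) − qval ψ p − qval ψ q + qval ψ (p q)|`. -/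
def qdefect (π : G →* Q) (s : Q → G) (hs : ∀ q, π (s q) = q)
    (c : G →* D ≃+* D) (ι : ↥π.ker →* Dˣ) (ψ : D → EReal) : EReal :=
  ⨆ p : Q, ⨆ q : Q,
    (fun e : EReal => max e (-e))
      (qval π s hs c ι ψ (qdelta Q 1 (muD π s hs ι p q)) -
        qval π s hs c ι ψ (qdelta Q p 1) - qval π s hs c ι ψ (qdelta Q q 1) +
        qval π s hs c ι ψ (qdelta Q (p * q) 1))

/-- With notation as in the `Q`-value setup, for all
`z, w ∈ D(H) Q`: (a) `qval ψ (z + w) ≥ min (qval ψ z) (qval ψ w)`;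
(b) `qval ψ (z w) ≥ qval ψ z + qval ψ w − |ψ|_Q`. -/
theorem stmt_14 (π : G →* Q) (hπ : Function.Surjective π) (s : Q → G)
    (hs : ∀ q, π (s q) = q) (hs1 : s 1 = 1)
    (c : G →* D ≃+* D) (ι : ↥π.ker →* Dˣ)
    (hcι : ∀ (g : G) (h : ↥π.ker),
      c g (ι h) = ι ⟨g * h * g⁻¹, Subgroup.Normal.conj_mem inferInstance _ h.2 g⟩)
    (hinner : ∀ (h : ↥π.ker) (x : D),
      c (h : G) x = (ι h : D) * x * ((ι h)⁻¹ : Dˣ))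
    (ψ : D → EReal) (hψ0 : ψ 0 = ⊤)
    (hψreal : ∀ x : D, x ≠ 0 → ψ x ≠ ⊤ ∧ ψ x ≠ ⊥)
    (hψmul : ∀ x y : D, x ≠ 0 → y ≠ 0 → ψ (x * y) = ψ x + ψ y)
    (hψadd : ∀ x y : D, min (ψ x) (ψ y) ≤ ψ (x + y))
    (z w : Q → D) :
    (min (qval π s hs c ι ψ z) (qval π s hs c ι ψ w) ≤
      qval π s hs c ι ψ (fun r => z r + w r)) ∧
    (qval π s hs c ι ψ z + qval π s hs c ι ψ w - qdefect π s hs c ι ψ ≤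
      qval π s hs c ι ψ (qmul π s hs c ι z w)) := by
  -- basic facts about ψ
  have ψ1 : ψ (1 : D) = 0 := by
    have h := hψmul 1 1 one_ne_zero one_ne_zero
    rw [mul_one] at h
    have hr := hψreal 1 one_ne_zero
    lift ψ (1 : D) to ℝ using hr with v hv
    norm_cast at h ⊢
    linarith
  have ψinv : ∀ x : D, x ≠ 0 → ψ x + ψ x⁻¹ = 0 := by
    intro x hx
    rw [← hψmul x x⁻¹ hx (inv_ne_zero hx), mul_inv_cancel₀ hx, ψ1]
  have psi_real : ∀ x : D, x ≠ 0 → ∃ v : ℝ, ψ x = (v : EReal) := by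
    intro x hx
    have h := hψreal x hx
    lift ψ x to ℝ using h with v hv
    exact ⟨v, rfl⟩
  have ψconj : ∀ u y : D, u ≠ 0 → y ≠ 0 → ψ (u * y * u⁻¹) = ψ y := by
    intro u y hu hy
    have h1 : ψ (u * y * u⁻¹) = ψ u + ψ y + ψ u⁻¹ := by
      rw [hψmul _ _ (mul_ne_zero hu hy) (inv_ne_zero hu), hψmul _ _ hu hy]
    have h2 := ψinv u hu
    obtain ⟨a, ha⟩ := psi_real u hu
    obtain ⟨b, hb⟩ := psi_real u⁻¹ (inv_ne_zero hu)
    obtain ⟨e, he⟩ := psi_real y hy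
    rw [ha, hb, he] at h1
    rw [ha, hb] at h2
    rw [h1, he]
    norm_cast at h2 ⊢
    linarith
  -- the weights are real
  have qwt_real : ∀ q : Q, ∃ v : ℝ, qwt π s hs ι ψ q = (v : EReal) := by
    intro q
    unfold qwt
    obtain ⟨v, hv⟩ := psi_real _ (Units.ne_zero (ι ⟨s q ^ Fintype.card Q, by
      rw [MonoidHom.mem_ker, map_pow, hs, pow_card_eq_one]⟩))
    rw [hv, ← EReal.coe_mul]
    exact ⟨_, rfl⟩
  have qwt_ne_bot : ∀ q : Q, qwt π s hs ι ψ q ≠ ⊥ := by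
    intro q; obtain ⟨v, hv⟩ := qwt_real q; simp [hv]
  have qwt1 : qwt π s hs ι ψ (1 : Q) = 0 := by
    unfold qwt
    have key : ∀ h, ι ⟨s (1:Q) ^ Fintype.card Q, h⟩ = 1 := by
      intro h
      have : (⟨s (1:Q) ^ Fintype.card Q, h⟩ : ↥π.ker) = 1 := Subtype.ext (by simp [hs1])
      rw [this, map_one]
    rw [key, Units.val_one, ψ1, mul_zero]
  -- qval bounds
  have qval_le : ∀ (x : Q → D) (p q : Q),
      qval π s hs c ι ψ x ≤ ψ (c (s p) (x q)) + qwt π s hs ι ψ q := by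
    intro x p q
    exact iInf_le_of_le p (iInf_le _ q)
  -- qval of deltas
  have qval_delta : ∀ q : Q, qval π s hs c ι ψ (qdelta Q q (1:D)) = qwt π s hs ι ψ q := by
    intro q
    apply le_antisymm
    · have h := qval_le (qdelta Q q (1:D)) 1 q
      simpa [qdelta, ψ1] using h
    · refine le_iInf fun p => le_iInf fun q' => ?_
      by_cases h : q' = q
      · subst h
        simp [qdelta, ψ1]
      · simp [qdelta, h, hψ0, EReal.top_add_of_ne_bot (qwt_ne_bot q')]
  -- conjugation compatibility
  have c_ne : ∀ (g : G) (x : D), x ≠ 0 → c g x ≠ 0 := by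
    intro g x hx; simp [hx]
  have hpsi_c_mul : ∀ (a p : Q) (y : D), y ≠ 0 →
      ψ (c (s a) (c (s p) y)) = ψ (c (s (a * p)) y) := by
    intro a p y hy
    have hker : s a * s p * (s (a * p))⁻¹ ∈ π.ker := by
      simp [MonoidHom.mem_ker, map_mul, map_inv, hs, ← mul_assoc]
    have hfact : s a * s p = (s a * s p * (s (a * p))⁻¹) * s (a * p) := by group
    have h1 : c (s a) (c (s p) y) = c (s a * s p) y := by
      rw [map_mul]; rfl
    rw [h1, hfact, map_mul]
    have h2 := hinner ⟨s a * s p * (s (a * p))⁻¹, hker⟩ (c (s (a * p)) y)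
    have h3 : (c (s a * s p * (s (a * p))⁻¹) * c (s (a * p))) y
        = c (s a * s p * (s (a * p))⁻¹) (c (s (a * p)) y) := rfl
    rw [h3, h2, Units.val_inv_eq_inv_val]
    exact ψconj _ _ (Units.ne_zero _) (c_ne _ _ hy)
  -- qval of δ_1 μ bounds ψ (c (s a) μ)
  have qval_mu_le : ∀ (a p q : Q),
      qval π s hs c ι ψ (qdelta Q 1 (muD π s hs ι p q)) ≤ ψ (c (s a) (muD π s hs ι p q)) := by
    intro a p q
    have h := qval_le (qdelta Q 1 (muD π s hs ι p q)) a 1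
    simpa [qdelta, qwt1] using h
  -- the defect bound
  have defect_ge : ∀ p q : Q, -(qdefect π s hs c ι ψ) ≤
      qval π s hs c ι ψ (qdelta Q 1 (muD π s hs ι p q)) -
        qval π s hs c ι ψ (qdelta Q p 1) - qval π s hs c ι ψ (qdelta Q q 1) +
        qval π s hs c ι ψ (qdelta Q (p * q) 1) := by
    intro p q
    rw [EReal.neg_le]
    have hmax : (fun e : EReal => max e (-e))
        (qval π s hs c ι ψ (qdelta Q 1 (muD π s hs ι p q)) -
          qval π s hs c ι ψ (qdelta Q p 1) - qval π s hs c ι ψ (qdelta Q q 1) +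
          qval π s hs c ι ψ (qdelta Q (p * q) 1)) ≤ qdefect π s hs c ι ψ :=
      le_iSup₂_of_le p q le_rfl
    exact le_trans (le_max_right _ _) hmax
  -- sums
  have psum : ∀ (t : EReal), t ≠ ⊥ → ∀ (S : Finset Q) (f : Q → D) (C : EReal),
      (∀ p ∈ S, C ≤ ψ (f p) + t) → C ≤ ψ (∑ p ∈ S, f p) + t := by
    intro t ht S
    induction S using Finset.cons_induction with
    | empty =>
      intro f C _
      simp [hψ0, EReal.top_add_of_ne_bot ht]
    | cons a S ha ih =>
      intro f C h
      rw [Finset.sum_cons]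
      have h1 : C ≤ ψ (f a) + t := h a (Finset.mem_cons_self _ _)
      have h2 : C ≤ ψ (∑ p ∈ S, f p) + t := ih f C fun p hp => h p (Finset.mem_cons_of_mem hp)
      have h4 : min (ψ (f a)) (ψ (∑ p ∈ S, f p)) + t ≤ ψ (f a + ∑ p ∈ S, f p) + t :=
        add_le_add (hψadd _ _) le_rfl
      refine le_trans ?_ h4
      rcases min_cases (ψ (f a)) (ψ (∑ p ∈ S, f p)) with ⟨hm, _⟩ | ⟨hm, _⟩ <;> rw [hm] <;>
        assumption
  constructor
  · -- part (a)
    refine le_iInf fun p => le_iInf fun q => ?_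
    have hX := qval_le z p q
    have hY := qval_le w p q
    have hadd : min (ψ (c (s p) (z q))) (ψ (c (s p) (w q))) + qwt π s hs ι ψ q ≤
        ψ (c (s p) (z q + w q)) + qwt π s hs ι ψ q := by
      rw [map_add]
      exact add_le_add (hψadd _ _) le_rfl
    refine le_trans ?_ hadd
    rcases min_cases (ψ (c (s p) (z q))) (ψ (c (s p) (w q))) with ⟨hm, _⟩ | ⟨hm, _⟩ <;>
      rw [hm] <;>
      [exact le_trans (min_le_left _ _) hX; exact le_trans (min_le_right _ _) hY]
  · -- part (b)
    refine le_iInf fun a => le_iInf fun r => ?_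
    unfold qmul
    rw [map_sum]
    refine psum _ (qwt_ne_bot r) Finset.univ _ _ fun p _ => ?_
    set q : Q := p⁻¹ * r with hq
    have hpq : p * q = r := by rw [hq]; group
    by_cases hzp : z p = 0
    · simp [hzp, hψ0, EReal.top_add_of_ne_bot (qwt_ne_bot r)]
    by_cases hwq : w q = 0
    · simp [hwq, hψ0, EReal.top_add_of_ne_bot (qwt_ne_bot r)]
    -- main case
    have hμne : muD π s hs ι p q ≠ 0 := Units.ne_zero _
    have hterm : ψ (c (s a) (z p * c (s p) (w q) * muD π s hs ι p q)) =
        ψ (c (s a) (z p)) + ψ (c (s (a * p)) (w q)) + ψ (c (s a) (muD π s hs ι p q)) := by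
      rw [map_mul, map_mul,
        hψmul _ _ (mul_ne_zero (c_ne _ _ hzp) (c_ne _ _ (c_ne _ _ hwq))) (c_ne _ _ hμne),
        hψmul _ _ (c_ne _ _ hzp) (c_ne _ _ (c_ne _ _ hwq)),
        hpsi_c_mul a p _ hwq]
    rw [hterm]
    -- real representatives
    obtain ⟨A, hA⟩ := psi_real _ (c_ne (s a) _ hzp)
    obtain ⟨B, hB⟩ := psi_real _ (c_ne (s (a * p)) _ hwq)
    obtain ⟨M, hM⟩ := psi_real _ (c_ne (s a) _ hμne)
    obtain ⟨wp, hwp⟩ := qwt_real p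
    obtain ⟨wq', hwq'⟩ := qwt_real q
    obtain ⟨wr, hwr⟩ := qwt_real r
    have h1 : qval π s hs c ι ψ z ≤ (A : EReal) + wp := by
      have := qval_le z a p; rwa [hA, hwp] at this
    have h2 : qval π s hs c ι ψ w ≤ (B : EReal) + wq' := by
      have := qval_le w (a * p) q; rwa [hB, hwq'] at this
    have h3 : -(qdefect π s hs c ι ψ) ≤ (M : EReal) - wp - wq' + wr := by
      refine le_trans (defect_ge p q) ?_
      rw [qval_delta p, qval_delta q, qval_delta (p * q), hpq, hwp, hwq', hwr]
      have hle := qval_mu_le a p q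
      rw [hM] at hle
      calc qval π s hs c ι ψ (qdelta Q 1 (muD π s hs ι p q)) - ↑wp - ↑wq' + ↑wr
          = qval π s hs c ι ψ (qdelta Q 1 (muD π s hs ι p q)) + ((-wp : ℝ) : EReal)
            + ((-wq' : ℝ) : EReal) + (wr : EReal) := by
            rw [sub_eq_add_neg, sub_eq_add_neg]; norm_cast
        _ ≤ (M : EReal) + ((-wp : ℝ) : EReal) + ((-wq' : ℝ) : EReal) + (wr : EReal) :=
            add_le_add (add_le_add (add_le_add hle le_rfl) le_rfl) le_rfl
        _ = (M : EReal) - wp - wq' + wr := by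
            rw [sub_eq_add_neg, sub_eq_add_neg]; norm_cast
    calc qval π s hs c ι ψ z + qval π s hs c ι ψ w - qdefect π s hs c ι ψ
        = qval π s hs c ι ψ z + qval π s hs c ι ψ w + -(qdefect π s hs c ι ψ) :=
          sub_eq_add_neg _ _
      _ ≤ ((A : EReal) + wp) + ((B : EReal) + wq') + ((M : EReal) - wp - wq' + wr) :=
          add_le_add (add_le_add h1 h2) h3
      _ = ((A : EReal) + B + M) + wr := by
          rw [sub_eq_add_neg, sub_eq_add_neg]; norm_cast; ring
      _ = ψ (c (s a) (z p)) + ψ (c (s (a * p)) (w q)) + ψ (c (s a) (muD π s hs ι p q))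
            + qwt π s hs ι ψ r := by rw [hA, hB, hM, hwr]
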